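/- Suppose φ is analytic on the closed disk |z| ≤ R and a_1, ..., a_N are nonzero complex numbers each of modulus less than R, pairwise distinct. Then |φ(0)| ≤ |φ|_R · ∏_{i=1}^{N} (|a_i|/R) + Σ_{i=1}^{N} |φ(a_i)| · ∏_{j=1}^{N} (|R² - a_i·conj(a_j)|/R²) · ∏_{k ≠ i} (|a_k|/|a_k - a_i|). -/

import Mathlib

open Finset

private lemma circleIntegral_finset_sum {ι : Type*} (s : Finset ι) (f : ι → ℂ → ℂ)
    (c : ℂ) (R : ℝ) (h : ∀ i ∈ s, CircleIntegrable (f i) c R) :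
    (∮ z in C(c, R), ∑ i ∈ s, f i z) = ∑ i ∈ s, ∮ z in C(c, R), f i z := by
  simp only [circleIntegral, Finset.smul_sum]
  exact intervalIntegral.integral_finset_sum (fun i hi => (h i hi).out)

private lemma partial_fractions {n : ℕ} [NeZero n] (v : Fin n → ℂ) (hv : Function.Injective v)
    (ζ : ℂ) (hζ : ∀ i, ζ - v i ≠ 0) :
    ∑ i, ((∏ j ∈ univ.erase i, (v i - v j))⁻¹ * (ζ - v i)⁻¹) = (∏ i, (ζ - v i))⁻¹ := by
  have h1 := Lagrange.sum_basis (s := (univ : Finset (Fin n))) (v := v) hv.injOn univ_nonempty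
  have h2 := congrArg (Polynomial.eval ζ) h1
  simp only [Polynomial.eval_finset_sum, Polynomial.eval_one, Lagrange.basis,
    Polynomial.eval_prod, Lagrange.basisDivisor, Polynomial.eval_mul, Polynomial.eval_C,
    Polynomial.eval_sub, Polynomial.eval_X] at h2
  calc ∑ i, ((∏ j ∈ univ.erase i, (v i - v j))⁻¹ * (ζ - v i)⁻¹)
      = (∏ i, (ζ - v i))⁻¹ * ∑ i, ∏ j ∈ univ.erase i, ((v i - v j)⁻¹ * (ζ - v j)) := by
        rw [Finset.mul_sum]
        refine Finset.sum_congr rfl fun i _ => ?_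
        rw [prod_mul_distrib, ← prod_inv_distrib,
          ← Finset.mul_prod_erase univ (fun j => ζ - v j) (mem_univ i)]
        have h3 : (∏ j ∈ univ.erase i, (ζ - v j)) ≠ 0 :=
          prod_ne_zero_iff.2 fun j _ => hζ j
        set P := ∏ j ∈ univ.erase i, (ζ - v j) with hPdef
        set Q := ∏ x ∈ univ.erase i, (v i - v x)⁻¹ with hQdef
        rw [mul_inv]
        rw [show (ζ - v i)⁻¹ * P⁻¹ * (Q * P) = Q * (ζ - v i)⁻¹ * (P⁻¹ * P) from by ring,
          inv_mul_cancel₀ h3, mul_one]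
    _ = (∏ i, (ζ - v i))⁻¹ := by rw [h2, mul_one]

private lemma key_abs {R : ℝ} (z w : ℂ) (hz : ‖z‖ = R) :
    ‖(R : ℂ) ^ 2 - (starRingEnd ℂ) w * z‖ = R * ‖z - w‖ := by
  have h1 : ((R : ℂ))^2 = z * (starRingEnd ℂ) z := by
    rw [Complex.mul_conj]
    norm_cast
    rw [Complex.normSq_eq_norm_sq, hz]
  rw [h1, show z * (starRingEnd ℂ) z - (starRingEnd ℂ) w * z
      = (starRingEnd ℂ) (z - w) * z by rw [map_sub]; ring]
  rw [norm_mul, Complex.norm_conj, hz, mul_comm]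

set_option maxHeartbeats 1000000 in
/-- A version of Jensen's inequality (Lemma 6 of Ito–Hirata-Kohno):
    if φ is analytic on |z| ≤ R, the a_i are pairwise distinct nonzero
    complex numbers of modulus < R, and Mφ bounds |φ| on the closed disk, then
    |φ(0)| ≤ Mφ ∏ (|a_i|/R)
      + Σ_i |φ(a_i)| ∏_j (|R² - a_i conj(a_j)|/R²) ∏_{k≠i} (|a_k|/|a_k - a_i|). -/
theorem jensen_estimate (R : ℝ) (hR : 0 < R) (φ : ℂ → ℂ)
    (hφ : AnalyticOn ℂ φ (Metric.closedBall (0 : ℂ) R))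
    (N : ℕ) (a : Fin N → ℂ) (ha : Function.Injective a)
    (ha0 : ∀ i, a i ≠ 0) (haR : ∀ i, ‖a i‖ < R)
    (Mφ : ℝ) (hM : ∀ z ∈ Metric.closedBall (0 : ℂ) R, ‖φ z‖ ≤ Mφ) :
    ‖φ 0‖ ≤
      Mφ * ∏ i, ‖a i‖ / R +
      ∑ i, ‖φ (a i)‖ *
        (∏ j, ‖(R : ℂ) ^ 2 - a i * (starRingEnd ℂ) (a j)‖ / R ^ 2) *
        ∏ k ∈ Finset.univ.erase i, ‖a k‖ / ‖a k - a i‖ := by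
  classical
  have hM0 : 0 ≤ Mφ := le_trans (norm_nonneg _) (hM 0 (by simp [hR.le]))
  set b : Fin (N + 1) → ℂ := Fin.cons 0 a with hbdef
  have hb0 : b 0 = 0 := rfl
  have hbs : ∀ i : Fin N, b i.succ = a i := fun i => rfl
  have hbR : ∀ p, ‖b p‖ < R := by
    intro p
    induction p using Fin.cases with
    | zero => simpa [hb0] using hR
    | succ i => simpa [hbs] using haR i
  have hbinj : Function.Injective b := by
    intro p q hpq
    rcases Fin.eq_zero_or_eq_succ p with rfl | ⟨i, rfl⟩ <;>
      rcases Fin.eq_zero_or_eq_succ q with rfl | ⟨j, rfl⟩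
    · rfl
    · exact absurd hpq.symm (by simpa [hb0, hbs] using ha0 j)
    · exact absurd hpq (by simpa [hb0, hbs] using ha0 i)
    · rw [hbs, hbs] at hpq; exact congrArg Fin.succ (ha hpq)
  set W : ℂ → ℂ := fun z => φ z * ∏ j, ((R : ℂ) ^ 2 - (starRingEnd ℂ) (a j) * z) with hWdef
  have hWc : DifferentiableOn ℂ W (Metric.closedBall 0 R) := by
    apply DifferentiableOn.mul (hφ.differentiableOn)
    apply Differentiable.differentiableOn
    apply Differentiable.fun_finsetProd
    intro j _
    exact (differentiable_const _).sub ((differentiable_const _).mul differentiable_id)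
  have hWd : DiffContOnCl ℂ W (Metric.ball 0 R) :=
    DifferentiableOn.diffContOnCl (by rwa [closure_ball (0:ℂ) hR.ne'])
  have cauchy : ∀ p, (∮ z in C(0, R), (z - b p)⁻¹ • W z)
      = (2 * Real.pi * Complex.I : ℂ) • W (b p) := by
    intro p
    exact hWd.circleIntegral_sub_inv_smul
      (by simpa [Metric.mem_ball, Complex.dist_eq] using hbR p)
  -- facts on the sphere
  have hzR : ∀ z ∈ Metric.sphere (0:ℂ) R, ‖z‖ = R := by
    intro z hz; simpa [Complex.dist_eq] using hz
  have hsub : ∀ z ∈ Metric.sphere (0:ℂ) R, ∀ p, z - b p ≠ 0 := by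
    intro z hz p h
    rw [sub_eq_zero] at h
    rw [h] at hz
    exact absurd (hzR _ hz) (ne_of_lt (hbR p))
  have hWcont : ContinuousOn W (Metric.sphere (0:ℂ) R) :=
    hWc.continuousOn.mono Metric.sphere_subset_closedBall
  set β : Fin (N + 1) → ℂ := fun p => (∏ q ∈ univ.erase p, (b p - b q))⁻¹ with hβdef
  have hint : ∀ p, CircleIntegrable (fun z => (β p * (z - b p)⁻¹) • W z) 0 R := by
    intro p
    apply ContinuousOn.circleIntegrable hR.le
    apply ContinuousOn.fun_smul _ hWcont
    exact continuousOn_const.mul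
      ((continuousOn_id.sub continuousOn_const).inv₀ (fun z hz => hsub z hz p))
  have hmain : (∮ z in C(0, R), (∏ q, (z - b q))⁻¹ • W z)
      = (2 * Real.pi * Complex.I : ℂ) * ∑ p, β p * W (b p) := by
    have heq : Set.EqOn (fun z => (∏ q, (z - b q))⁻¹ • W z)
        (fun z => ∑ p, (β p * (z - b p)⁻¹) • W z) (Metric.sphere (0:ℂ) R) := by
      intro z hz
      simp only
      rw [← Finset.sum_smul]
      have := partial_fractions b hbinj z (fun p => hsub z hz p)
      simp only [hβdef]
      rw [this]
    rw [circleIntegral.integral_congr hR.le heq,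
      circleIntegral_finset_sum _ _ _ _ (fun p _ => hint p)]
    have hterm : ∀ p, (∮ z in C(0, R), (β p * (z - b p)⁻¹) • W z)
        = β p * ((2 * Real.pi * Complex.I : ℂ) * W (b p)) := by
      intro p
      have : (fun z => (β p * (z - b p)⁻¹) • W z)
          = fun z => β p • ((z - b p)⁻¹ • W z) := by
        funext z; rw [smul_smul]
      rw [this, circleIntegral.integral_smul, cauchy p, smul_eq_mul, smul_eq_mul]
    rw [Finset.sum_congr rfl (fun p _ => hterm p), Finset.mul_sum]
    exact Finset.sum_congr rfl (fun p _ => by ring)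
  have hWabs : ∀ z ∈ Metric.sphere (0:ℂ) R, ‖W z‖
      = ‖φ z‖ * (R ^ N * ∏ j, ‖z - a j‖) := by
    intro z hz
    rw [hWdef]
    simp only
    rw [norm_mul, norm_prod]
    congr 1
    calc ∏ j, ‖(R:ℂ)^2 - (starRingEnd ℂ) (a j) * z‖
        = ∏ j, (R * ‖z - a j‖) :=
          Finset.prod_congr rfl fun j _ => key_abs _ _ (hzR z hz)
      _ = R ^ N * ∏ j, ‖z - a j‖ := by
          rw [Finset.prod_mul_distrib, Finset.prod_const, card_univ, Fintype.card_fin]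
  have hprodabs : ∀ z ∈ Metric.sphere (0:ℂ) R,
      ‖∏ q, (z - b q)‖ = R * ∏ j, ‖z - a j‖ := by
    intro z hz
    rw [norm_prod, Fin.prod_univ_succ, hb0, sub_zero, hzR z hz]
    rfl
  have hptbound : ∀ z ∈ Metric.sphere (0:ℂ) R,
      ‖(∏ q, (z - b q))⁻¹ • W z‖ ≤ Mφ * (R ^ N / R) := by
    intro z hz
    have hP : 0 < ∏ j, ‖z - a j‖ := by
      apply Finset.prod_pos
      intro j _
      exact norm_pos_iff.2 (hsub z hz j.succ)
    rw [norm_smul, norm_inv, hprodabs z hz, hWabs z hz]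
    have hφz := hM z (Metric.sphere_subset_closedBall hz)
    calc (R * ∏ j, ‖z - a j‖)⁻¹
          * (‖φ z‖ * (R ^ N * ∏ j, ‖z - a j‖))
        = ‖φ z‖ * (R ^ N / R) := by
          field_simp
      _ ≤ Mφ * (R ^ N / R) := by
          apply mul_le_mul_of_nonneg_right hφz
          positivity
  have hnorm : ‖∮ z in C(0, R), (∏ q, (z - b q))⁻¹ • W z‖
      ≤ 2 * Real.pi * R * (Mφ * (R ^ N / R)) :=
    circleIntegral.norm_integral_le_of_norm_le_const hR.le hptbound
  have hS : ‖∑ p, β p * W (b p)‖ ≤ Mφ * R ^ N := by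
    rw [hmain] at hnorm
    rw [norm_mul] at hnorm
    have h2pi : ‖2 * Real.pi * Complex.I‖ = 2 * Real.pi := by
      simp [Complex.norm_real, Real.pi_pos.le, abs_of_nonneg]
    rw [h2pi] at hnorm
    have := le_of_mul_le_mul_left (by
      calc 2 * Real.pi * ‖∑ p, β p * W (b p)‖
          ≤ 2 * Real.pi * R * (Mφ * (R ^ N / R)) := hnorm
        _ = 2 * Real.pi * (Mφ * R ^ N) := by field_simp) Real.two_pi_pos
    exact this
  -- compute the pieces
  have hA : 0 < ∏ i, ‖a i‖ :=
    Finset.prod_pos fun i _ => norm_pos_iff.2 (ha0 i)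
  have hβ0 : ‖β 0‖ = (∏ i, ‖a i‖)⁻¹ := by
    rw [hβdef]
    simp only
    rw [norm_inv]
    congr 1
    rw [show (univ : Finset (Fin (N+1))).erase 0
        = univ.map ⟨Fin.succ, Fin.succ_injective _⟩ by rw [Fin.univ_succ, Finset.erase_cons],
      Finset.prod_map, norm_prod]
    refine Finset.prod_congr rfl fun i _ => ?_
    simp [hb0, hbs]
  have hW0 : ‖W (b 0)‖ = ‖φ 0‖ * R ^ (2 * N) := by
    rw [hb0, hWdef]
    simp only
    rw [norm_mul, norm_prod]
    congr 1
    calc ∏ j, ‖(R:ℂ)^2 - (starRingEnd ℂ) (a j) * 0‖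
        = ∏ _j : Fin N, (R^2 : ℝ) :=
          Finset.prod_congr rfl fun j _ => by simp [abs_of_pos hR]
      _ = R ^ (2*N) := by
          rw [Finset.prod_const, card_univ, Fintype.card_fin, ← pow_mul]
  have hβs : ∀ i : Fin N, ‖β i.succ‖
      = (‖a i‖ * ∏ k ∈ univ.erase i, ‖a i - a k‖)⁻¹ := by
    intro i
    rw [hβdef]
    simp only
    rw [norm_inv]
    congr 1
    have h1 : (univ : Finset (Fin (N+1))).erase i.succ
        = insert 0 ((univ.erase i).map ⟨Fin.succ, Fin.succ_injective _⟩) := by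
      have h3 := Finset.map_erase (⟨Fin.succ, Fin.succ_injective _⟩ : Fin N ↪ Fin (N+1)) univ i
      simp only [Function.Embedding.coeFn_mk] at h3
      rw [Fin.univ_succ, Finset.cons_eq_insert,
        Finset.erase_insert_of_ne (Fin.succ_ne_zero i).symm, ← h3]
    have h2 : (0 : Fin (N+1)) ∉ (univ.erase i).map ⟨Fin.succ, Fin.succ_injective _⟩ := by
      simp [Finset.mem_map]
    rw [h1, Finset.prod_insert h2, Finset.prod_map, norm_mul, norm_prod]
    simp [hb0, hbs]
  have hWai : ∀ i : Fin N, ‖W (b i.succ)‖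
      = ‖φ (a i)‖
        * ∏ j, ‖(R:ℂ)^2 - a i * (starRingEnd ℂ) (a j)‖ := by
    intro i
    rw [hbs, hWdef]
    simp only
    rw [norm_mul, norm_prod]
    congr 1
    refine Finset.prod_congr rfl fun j _ => ?_
    rw [mul_comm ((starRingEnd ℂ) (a j)) (a i)]
  -- triangle inequality
  have htri : ‖β 0 * W (b 0)‖
      ≤ Mφ * R ^ N + ∑ i : Fin N, ‖β i.succ * W (b i.succ)‖ := by
    have hsplit : ∑ p, β p * W (b p) = β 0 * W (b 0) + ∑ i : Fin N, β i.succ * W (b i.succ) :=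
      Fin.sum_univ_succ _
    set s := ∑ i : Fin N, β i.succ * W (b i.succ) with hsdef
    calc ‖β 0 * W (b 0)‖
        = ‖(β 0 * W (b 0) + s) + (-s)‖ := by rw [add_neg_cancel_right]
      _ ≤ ‖β 0 * W (b 0) + s‖ + ‖-s‖ := norm_add_le _ _
      _ = ‖∑ p, β p * W (b p)‖ + ‖s‖ := by rw [norm_neg, hsplit]
      _ ≤ Mφ * R ^ N + ∑ i : Fin N, ‖β i.succ * W (b i.succ)‖ := by
          refine add_le_add hS ?_
          rw [hsdef]
          exact norm_sum_le _ _
  have htri2 : (∏ i, ‖a i‖)⁻¹ * (‖φ 0‖ * R ^ (2*N))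
      ≤ Mφ * R ^ N + ∑ i : Fin N, ‖β i.succ * W (b i.succ)‖ := by
    rwa [norm_mul, hβ0, hW0] at htri
  have hRN : (0:ℝ) < R ^ (2*N) := pow_pos hR _
  calc ‖φ 0‖
      = ((∏ i, ‖a i‖) / R ^ (2*N))
        * ((∏ i, ‖a i‖)⁻¹ * (‖φ 0‖ * R ^ (2*N))) := by
        field_simp
    _ ≤ ((∏ i, ‖a i‖) / R ^ (2*N))
        * (Mφ * R ^ N + ∑ i : Fin N, ‖β i.succ * W (b i.succ)‖) :=
        mul_le_mul_of_nonneg_left htri2 (div_pos hA hRN).le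
    _ = Mφ * ∏ i, ‖a i‖ / R
        + ∑ i : Fin N, ((∏ m, ‖a m‖) / R ^ (2*N))
            * ‖β i.succ * W (b i.succ)‖ := by
        rw [mul_add, Finset.mul_sum]
        congr 1
        rw [Finset.prod_div_distrib, Finset.prod_const, card_univ, Fintype.card_fin,
          two_mul, pow_add]
        field_simp
    _ = Mφ * ∏ i, ‖a i‖ / R
        + ∑ i, ‖φ (a i)‖
            * (∏ j, ‖(R : ℂ) ^ 2 - a i * (starRingEnd ℂ) (a j)‖ / R ^ 2)
            * ∏ k ∈ Finset.univ.erase i, ‖a k‖ / ‖a k - a i‖ := by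
        congr 1
        refine Finset.sum_congr rfl fun i _ => ?_
        rw [norm_mul, hβs i, hWai i]
        have hsub' : (∏ k ∈ univ.erase i, (‖a k‖ / ‖a k - a i‖))
            = (∏ k ∈ univ.erase i, ‖a k‖)
              / ∏ k ∈ univ.erase i, ‖a i - a k‖ := by
          rw [Finset.prod_div_distrib]
          congr 1
          exact Finset.prod_congr rfl fun k _ => by rw [norm_sub_rev]
        rw [hsub', Finset.prod_div_distrib, Finset.prod_const, card_univ, Fintype.card_fin]
        rw [← Finset.mul_prod_erase univ (fun k => ‖a k‖) (mem_univ i)]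
        have hai : ‖a i‖ ≠ 0 := (norm_pos_iff.2 (ha0 i)).ne'
        have hPi : (∏ k ∈ univ.erase i, ‖a i - a k‖) ≠ 0 := by
          apply Finset.prod_ne_zero_iff.2
          intro k hk
          exact (norm_pos_iff.2 (sub_ne_zero.2 fun h =>
            (Finset.mem_erase.1 hk).1 (ha h.symm))).ne'
        rw [pow_mul]
        field_simp
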